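/- arXiv:2105.02344 — 2 statements merged into one kernel-verified Lean document; each statement's English description precedes it below -/
import Mathlib

section
/- For any two probability measures P and Q on the same measurable space, 1 - TV(P,Q) ≥ (1/2)·exp(-D_KL(P‖Q)), where TV denotes the total variation distance and D_KL the Kullback–Leibler divergence. -/
open MeasureTheory
open scoped ENNReal
open Classical

/-- Total variation distance: `sup_A |P(A) - Q(A)|` over measurable sets `A`. -/
noncomputable def tvDist {Ω : Type*} [MeasurableSpace Ω] (P Q : Measure Ω) : ℝ :=
  ⨆ A : {s : Set Ω // MeasurableSet s}, |(P A).toReal - (Q A).toReal|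

/-- Kullback–Leibler divergence: `∫ log (dP/dQ) dP` when `P ≪ Q` (and this
integrand is integrable), `+∞` otherwise. -/
noncomputable def klDiv' {Ω : Type*} [MeasurableSpace Ω] (P Q : Measure Ω) : ℝ≥0∞ :=
  if P ≪ Q ∧ Integrable (fun ω => Real.log (P.rnDeriv Q ω).toReal) P then
    ENNReal.ofReal (∫ ω, Real.log (P.rnDeriv Q ω).toReal ∂P)
  else ⊤

theorem stmt_2 {Ω : Type*} [MeasurableSpace Ω] (P Q : Measure Ω)
    [IsProbabilityMeasure P] [IsProbabilityMeasure Q] :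
    1 - tvDist P Q ≥
      (1 / 2) * (if klDiv' P Q = ⊤ then 0 else Real.exp (-(klDiv' P Q).toReal)) := by
  have hne : Nonempty {s : Set Ω // MeasurableSet s} := ⟨⟨∅, MeasurableSet.empty⟩⟩
  have htv_le : ∀ c : ℝ, (∀ A : Set Ω, MeasurableSet A →
      |(P A).toReal - (Q A).toReal| ≤ c) → tvDist P Q ≤ c := fun c h =>
    ciSup_le fun A => h A.1 A.2
  by_cases htop : klDiv' P Q = ⊤
  · rw [if_pos htop]
    have h1 : tvDist P Q ≤ 1 := by
      refine htv_le 1 fun A _ => ?_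
      have hP : (P A).toReal ≤ 1 := by
        simpa using ENNReal.toReal_mono ENNReal.one_ne_top prob_le_one
      have hQ : (Q A).toReal ≤ 1 := by
        simpa using ENNReal.toReal_mono ENNReal.one_ne_top prob_le_one
      rw [abs_sub_le_iff]
      constructor <;> [skip; skip] <;>
        · have := ENNReal.toReal_nonneg (a := P A)
          have := ENNReal.toReal_nonneg (a := Q A)
          linarith
    simp only [mul_zero, ge_iff_le]
    linarith
  · rw [if_neg htop]
    have hcond : P ≪ Q ∧ Integrable (fun ω => Real.log (P.rnDeriv Q ω).toReal) P := by
      by_contra hc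
      exact htop (by rw [klDiv', if_neg hc])
    obtain ⟨hac, hint⟩ := hcond
    set I := ∫ ω, Real.log (P.rnDeriv Q ω).toReal ∂P with hIdef
    have hkl : klDiv' P Q = ENNReal.ofReal I := by
      rw [klDiv', if_pos ⟨hac, hint⟩]
    set p := P.rnDeriv Q with hpdef
    have hpm : Measurable p := Measure.measurable_rnDeriv P Q
    set m : ℝ≥0∞ := ∫⁻ ω, min (p ω) 1 ∂Q with hmdef
    have hm_le_one : m ≤ 1 := by
      calc m ≤ ∫⁻ _, 1 ∂Q := lintegral_mono fun ω => min_le_right _ _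
        _ = 1 := by simp
    have hm_ne_top : m ≠ ⊤ := (hm_le_one.trans_lt ENNReal.one_lt_top).ne
    -- Step A : tvDist ≤ 1 - m.toReal
    have hptot : ∫⁻ ω, p ω ∂Q = 1 := by
      rw [Measure.lintegral_rnDeriv hac]; simp
    have hstepA : tvDist P Q ≤ 1 - m.toReal := by
      refine htv_le _ fun A hA => ?_
      have hsplit : m = (∫⁻ ω in A, min (p ω) 1 ∂Q) + ∫⁻ ω in Aᶜ, min (p ω) 1 ∂Q :=
        (lintegral_add_compl _ hA).symm
      have hPA : P A = ∫⁻ ω in A, p ω ∂Q := (Measure.setLIntegral_rnDeriv' hac hA).symm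
      have hpAc : ∫⁻ ω in A, p ω ∂Q + ∫⁻ ω in Aᶜ, p ω ∂Q = 1 := by
        rw [lintegral_add_compl _ hA, hptot]
      have e1 : ∫⁻ ω in A, min (p ω) 1 ∂Q ≤ Q A := by
        calc ∫⁻ ω in A, min (p ω) 1 ∂Q ≤ ∫⁻ _ in A, 1 ∂Q :=
              lintegral_mono fun ω => min_le_right _ _
          _ = Q A := by simp
      have e1' : ∫⁻ ω in Aᶜ, min (p ω) 1 ∂Q ≤ Q Aᶜ := by
        calc ∫⁻ ω in Aᶜ, min (p ω) 1 ∂Q ≤ ∫⁻ _ in Aᶜ, 1 ∂Q :=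
              lintegral_mono fun ω => min_le_right _ _
          _ = Q Aᶜ := by simp
      have e2 : ∫⁻ ω in Aᶜ, min (p ω) 1 ∂Q ≤ ∫⁻ ω in Aᶜ, p ω ∂Q :=
        lintegral_mono fun ω => min_le_left _ _
      have e2' : ∫⁻ ω in A, min (p ω) 1 ∂Q ≤ ∫⁻ ω in A, p ω ∂Q :=
        lintegral_mono fun ω => min_le_left _ _
      have h1 : P A + m ≤ 1 + Q A := by
        calc P A + m
            = (∫⁻ ω in A, p ω ∂Q + ∫⁻ ω in Aᶜ, min (p ω) 1 ∂Q)
              + ∫⁻ ω in A, min (p ω) 1 ∂Q := by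
              rw [hPA, hsplit]; ring
          _ ≤ (∫⁻ ω in A, p ω ∂Q + ∫⁻ ω in Aᶜ, p ω ∂Q) + Q A :=
              add_le_add (add_le_add_right e2 _) e1
          _ = 1 + Q A := by rw [hpAc]
      have h2 : Q A + m ≤ 1 + P A := by
        calc Q A + m
            = (Q A + ∫⁻ ω in Aᶜ, min (p ω) 1 ∂Q) + ∫⁻ ω in A, min (p ω) 1 ∂Q := by
              rw [hsplit]; ring
          _ ≤ (Q A + Q Aᶜ) + ∫⁻ ω in A, p ω ∂Q :=
              add_le_add (add_le_add_right e1' _) e2'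
          _ = 1 + P A := by rw [measure_add_measure_compl hA, ← hPA]; simp
      have hfin : ∀ s : Set Ω, P s ≠ ⊤ ∧ Q s ≠ ⊤ := fun s =>
        ⟨measure_ne_top _ _, measure_ne_top _ _⟩
      have t1 : (P A).toReal + m.toReal ≤ 1 + (Q A).toReal := by
        have := ENNReal.toReal_mono (by simp [(hfin A).2]) h1
        rwa [ENNReal.toReal_add (hfin A).1 hm_ne_top,
          ENNReal.toReal_add ENNReal.one_ne_top (hfin A).2, ENNReal.toReal_one] at this
      have t2 : (Q A).toReal + m.toReal ≤ 1 + (P A).toReal := by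
        have := ENNReal.toReal_mono (by simp [(hfin A).1]) h2
        rwa [ENNReal.toReal_add (hfin A).2 hm_ne_top,
          ENNReal.toReal_add ENNReal.one_ne_top (hfin A).1, ENNReal.toReal_one] at this
      rw [abs_sub_le_iff]
      constructor <;> linarith
    -- Step B : Cauchy-Schwarz, S^2 ≤ 2 * m
    set S : ℝ≥0∞ := ∫⁻ ω, p ω ^ (1/2 : ℝ) ∂Q with hSdef
    have hconj : (2:ℝ).HolderConjugate 2 := Real.HolderConjugate.two_two
    have hfm : Measurable fun ω => min (p ω) 1 ^ (1/2 : ℝ) :=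
      (hpm.min measurable_const).pow measurable_const
    have hgm : Measurable fun ω => max (p ω) 1 ^ (1/2 : ℝ) :=
      (hpm.max measurable_const).pow measurable_const
    have hcs := ENNReal.lintegral_mul_le_Lp_mul_Lq Q hconj hfm.aemeasurable hgm.aemeasurable
    have hlhs : ∫⁻ ω, ((fun ω => min (p ω) 1 ^ (1/2 : ℝ)) *
        fun ω => max (p ω) 1 ^ (1/2 : ℝ)) ω ∂Q = S := by
      refine lintegral_congr fun ω => ?_
      simp only [Pi.mul_apply]
      rw [← ENNReal.mul_rpow_of_nonneg _ _ (by norm_num : (0:ℝ) ≤ 1/2),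
        min_mul_max, mul_one]
    have hsq : ∀ x : ℝ≥0∞, (x ^ (1/2 : ℝ)) ^ (2 : ℝ) = x := by
      intro x
      rw [← ENNReal.rpow_mul]
      norm_num
    have hM : ∫⁻ ω, max (p ω) 1 ∂Q ≤ 2 := by
      calc ∫⁻ ω, max (p ω) 1 ∂Q ≤ ∫⁻ ω, p ω + 1 ∂Q :=
            lintegral_mono fun ω => max_le le_self_add le_add_self
        _ = 2 := by rw [lintegral_add_left hpm, hptot]; simp; norm_num
    have hcs' : S ≤ m ^ (1/2 : ℝ) * 2 ^ (1/2 : ℝ) := by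
      have hmin : ∫⁻ a, (min (p a) 1 ^ (1/2:ℝ)) ^ (2:ℝ) ∂Q = m :=
        lintegral_congr fun ω => hsq _
      have hmax : ∫⁻ a, (max (p a) 1 ^ (1/2:ℝ)) ^ (2:ℝ) ∂Q = ∫⁻ ω, max (p ω) 1 ∂Q :=
        lintegral_congr fun ω => hsq _
      rw [hlhs, hmin, hmax] at hcs
      refine hcs.trans ?_
      rw [one_div]
      exact mul_le_mul_right (ENNReal.rpow_le_rpow hM (by norm_num)) _
    have hSm : S ^ (2:ℝ) ≤ 2 * m := by
      calc S ^ (2:ℝ) ≤ (m ^ (1/2 : ℝ) * 2 ^ (1/2 : ℝ)) ^ (2:ℝ) :=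
            ENNReal.rpow_le_rpow hcs' (by norm_num)
        _ = m * 2 := by
            rw [ENNReal.mul_rpow_of_nonneg _ _ (by norm_num : (0:ℝ) ≤ 2), hsq, hsq]
        _ = 2 * m := mul_comm _ _
    -- Step C : ofReal (exp (-(1/2) * I)) ≤ S
    have hPwd : P = Q.withDensity p := (Measure.withDensity_rnDeriv_eq P Q hac).symm
    have hmneg : Measurable fun ω => p ω ^ (-(1/2) : ℝ) := hpm.pow measurable_const
    have hle1 : ∫⁻ ω, p ω ^ (-(1/2) : ℝ) ∂P ≤ S := by
      conv_lhs => rw [hPwd]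
      rw [lintegral_withDensity_eq_lintegral_mul _ hpm hmneg]
      refine lintegral_mono fun ω => ?_
      simp only [Pi.mul_apply]
      rcases eq_or_ne (p ω) 0 with h0 | h0
      · simp [h0]
      rcases eq_or_ne (p ω) ⊤ with ht | ht
      · simp [ht, ENNReal.top_rpow_of_neg (by norm_num : (-(1/2) : ℝ) < 0)]
      · have : p ω * p ω ^ (-(1/2) : ℝ) = p ω ^ (1/2 : ℝ) := by
          nth_rewrite 1 [← ENNReal.rpow_one (p ω)]
          rw [← ENNReal.rpow_add _ _ h0 ht]
          norm_num
        rw [this]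
    set g : Ω → ℝ := fun ω => Real.exp (-(1/2) * Real.log (p ω).toReal) with hgdef
    have haepos : ∀ᵐ ω ∂P, 0 < p ω := Measure.rnDeriv_pos hac
    have haelt : ∀ᵐ ω ∂P, p ω < ⊤ := hac.ae_le (Measure.rnDeriv_lt_top P Q)
    have haeeq : (fun ω => p ω ^ (-(1/2) : ℝ)) =ᵐ[P]
        fun ω => ENNReal.ofReal (g ω) := by
      filter_upwards [haepos, haelt] with ω h0 ht
      have htr : 0 < (p ω).toReal := ENNReal.toReal_pos h0.ne' ht.ne
      have : g ω = (p ω).toReal ^ (-(1/2) : ℝ) := by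
        rw [Real.rpow_def_of_pos htr, mul_comm]
      rw [this, ← ENNReal.ofReal_rpow_of_pos htr, ENNReal.ofReal_toReal ht.ne]
    have hleq : ∫⁻ ω, p ω ^ (-(1/2) : ℝ) ∂P = ∫⁻ ω, ENNReal.ofReal (g ω) ∂P :=
      lintegral_congr_ae haeeq
    have hgmeas : Measurable g :=
      ((measurable_const.mul
        (Real.measurable_log.comp (ENNReal.measurable_toReal.comp hpm)))).exp
    have hgnn : 0 ≤ᵐ[P] g := ae_of_all _ fun ω => (Real.exp_pos _).le
    have hS : ENNReal.ofReal (Real.exp (-(1/2) * I)) ≤ S := by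
      by_cases hgi : Integrable g P
      · -- Jensen
        have hfint : Integrable (fun ω => -(1/2) * Real.log (p ω).toReal) P :=
          hint.const_mul _
        have hjensen : Real.exp (∫ ω, -(1/2) * Real.log (p ω).toReal ∂P) ≤ ∫ ω, g ω ∂P := by
          have := convexOn_exp.map_integral_le (μ := P)
            (f := fun ω => -(1/2) * Real.log (p ω).toReal)
            Real.continuous_exp.continuousOn isClosed_univ
            (ae_of_all _ fun _ => Set.mem_univ _) hfint (by exact hgi)
          exact this
        have hIint : ∫ ω, -(1/2) * Real.log (p ω).toReal ∂P = -(1/2) * I := by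
          rw [integral_const_mul]
        rw [hIint] at hjensen
        calc ENNReal.ofReal (Real.exp (-(1/2) * I)) ≤ ENNReal.ofReal (∫ ω, g ω ∂P) :=
              ENNReal.ofReal_le_ofReal hjensen
          _ = ∫⁻ ω, ENNReal.ofReal (g ω) ∂P :=
              ofReal_integral_eq_lintegral_ofReal hgi hgnn
          _ = ∫⁻ ω, p ω ^ (-(1/2) : ℝ) ∂P := hleq.symm
          _ ≤ S := hle1
      · have hnfi : ¬ HasFiniteIntegral g P := fun h =>
          hgi ⟨hgmeas.aestronglyMeasurable, h⟩
        rw [hasFiniteIntegral_iff_ofReal hgnn, not_lt, top_le_iff] at hnfi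
        have : ∫⁻ ω, p ω ^ (-(1/2) : ℝ) ∂P = ⊤ := by rw [hleq, hnfi]
        have hStop : S = ⊤ := top_le_iff.mp (this ▸ hle1)
        simp [hStop]
    -- combine
    have hfinal : ENNReal.ofReal (Real.exp (-I)) ≤ 2 * m := by
      have he : Real.exp (-I) = Real.exp (-(1/2) * I) ^ (2:ℝ) := by
        rw [Real.rpow_def_of_pos (Real.exp_pos _), Real.log_exp]
        congr 1; ring
      calc ENNReal.ofReal (Real.exp (-I))
          = (ENNReal.ofReal (Real.exp (-(1/2) * I))) ^ (2:ℝ) := by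
            rw [he, ENNReal.ofReal_rpow_of_pos (Real.exp_pos _)]
        _ ≤ S ^ (2:ℝ) := ENNReal.rpow_le_rpow hS (by norm_num)
        _ ≤ 2 * m := hSm
    have h2m : (2:ℝ≥0∞) * m ≠ ⊤ := ENNReal.mul_ne_top (by simp) hm_ne_top
    have hreal : Real.exp (-I) ≤ 2 * m.toReal := by
      have := (ENNReal.ofReal_le_iff_le_toReal h2m).mp hfinal
      rwa [ENNReal.toReal_mul, ENNReal.toReal_ofNat] at this
    have hexpI : Real.exp (-(klDiv' P Q).toReal) ≤ Real.exp (-I) := by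
      rw [hkl]
      refine Real.exp_le_exp.mpr (neg_le_neg ?_)
      rw [ENNReal.toReal_ofReal']
      exact le_max_left _ _
    have : (1:ℝ)/2 * Real.exp (-(klDiv' P Q).toReal) ≤ m.toReal := by
      nlinarith [Real.exp_pos (-(klDiv' P Q).toReal)]
    linarith
end

section
/- Let 𝒲 be a finite set, W a 𝒲-valued random variable with P(W = w) = e(w) > 0, and Y = μ(W) + ε where ε is independent of W with mean 0 and variance σ². Fix π : 𝒲 → [0,1] and μ̂ : 𝒲 → ℝ, and let Γ̂ = ∑_w π(w)(μ̂(w) + (1{W=w}/e(w))(Y - μ̂(w))). Then E[(Γ̂ - ∑_w π(w)μ(w))²] = ∑_w π(w)²·((μ̂(w) - μ(w))² + σ²)/e(w) - (∑_w π(w)(μ̂(w) - μ(w)))². -/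
open MeasureTheory ProbabilityTheory

theorem stmt_13 {Ω : Type*} [MeasurableSpace Ω] (P : Measure Ω) [IsProbabilityMeasure P]
    {W' : Type*} [Fintype W'] [DecidableEq W'] [MeasurableSpace W'] [MeasurableSingletonClass W']
    (W : Ω → W') (hW : Measurable W) (εv : Ω → ℝ) (hεmeas : Measurable εv)
    (hindep : IndepFun εv W P)
    (hint1 : Integrable εv P) (hint2 : Integrable (fun ω => εv ω ^ 2) P)
    (hmean : (∫ ω, εv ω ∂P) = 0) (σ : ℝ) (hvar : (∫ ω, εv ω ^ 2 ∂P) = σ ^ 2)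
    (μ μhat : W' → ℝ) (π : W' → ℝ) (hπ : ∀ w, π w ∈ Set.Icc (0 : ℝ) 1)
    (e : W' → ℝ) (he : ∀ w, e w = (P {ω | W ω = w}).toReal) (hepos : ∀ w, 0 < e w)
    (Y : Ω → ℝ) (hYdef : ∀ ω, Y ω = μ (W ω) + εv ω) :
    (∫ ω, (∑ w, π w * (μhat w + (if W ω = w then 1 else 0) / e w * (Y ω - μhat w)) -
        ∑ w, π w * μ w) ^ 2 ∂P) =
      ∑ w, (π w) ^ 2 * ((μhat w - μ w) ^ 2 + σ ^ 2) / e w -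
        (∑ w, π w * (μhat w - μ w)) ^ 2 := by
  classical
  have hene : ∀ w, e w ≠ 0 := fun w => (hepos w).ne'
  set A : ℝ := ∑ w, π w * (μhat w - μ w) with hAdef
  set h : W' → ℝ := fun w => π w * (μ w - μhat w) / e w with hh
  set g : W' → ℝ := fun w => π w / e w with hg
  have hs : ∀ w : W', MeasurableSet {ω | W ω = w} := fun w => hW (measurableSet_singleton w)
  -- Step 1: pointwise identity for the base expression
  have hpt : ∀ ω, (∑ w, π w * (μhat w + (if W ω = w then 1 else 0) / e w * (Y ω - μhat w)) -
      ∑ w, π w * μ w) = A + h (W ω) + g (W ω) * εv ω := by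
    intro ω
    have hsum : (∑ w, π w * ((if W ω = w then (1:ℝ) else 0) / e w * (Y ω - μhat w)))
        = π (W ω) / e (W ω) * (Y ω - μhat (W ω)) := by
      rw [Finset.sum_eq_single (W ω)]
      · rw [if_pos rfl]; ring
      · intro b _ hb
        simp [Ne.symm hb]
      · simp
    have hexp : ∀ w, π w * (μhat w + (if W ω = w then (1:ℝ) else 0) / e w * (Y ω - μhat w))
        = π w * μhat w + π w * ((if W ω = w then (1:ℝ) else 0) / e w * (Y ω - μhat w)) := by
      intro w; ring
    rw [Finset.sum_congr rfl fun w _ => hexp w, Finset.sum_add_distrib, hsum, hYdef]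
    have hAsplit : A = ∑ w, π w * μhat w - ∑ w, π w * μ w := by
      rw [hAdef, ← Finset.sum_sub_distrib]
      exact Finset.sum_congr rfl fun w _ => by ring
    rw [hh, hg]
    rw [hAsplit]; ring
  simp only [hpt]
  -- Step 2: pointwise decomposition of the square
  have hpt2 : ∀ ω, (A + h (W ω) + g (W ω) * εv ω) ^ 2
      = ∑ w, ((A + h w) ^ 2 * (if W ω = w then (1:ℝ) else 0)
          + (2 * (A + h w) * g w) * ((if W ω = w then (1:ℝ) else 0) * εv ω)
          + g w ^ 2 * ((if W ω = w then (1:ℝ) else 0) * εv ω ^ 2)) := by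
    intro ω
    rw [Finset.sum_eq_single (W ω)]
    · rw [if_pos rfl]; ring
    · intro b _ hb; simp [Ne.symm hb]
    · simp
  simp only [hpt2]
  -- Integrability facts
  have hInd : ∀ w : W', (fun ω => if W ω = w then (1:ℝ) else 0)
      = Set.indicator {ω | W ω = w} (1 : Ω → ℝ) := by
    intro w; funext ω; simp [Set.indicator_apply]
  have hIint : ∀ w, Integrable (fun ω => if W ω = w then (1:ℝ) else 0) P := by
    intro w; rw [hInd w]; exact (integrable_const 1).indicator (hs w)
  have hIε : ∀ w : W', (fun ω => (if W ω = w then (1:ℝ) else 0) * εv ω)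
      = Set.indicator {ω | W ω = w} εv := by
    intro w; funext ω; simp [Set.indicator_apply, ite_mul]
  have hIεint : ∀ w, Integrable (fun ω => (if W ω = w then (1:ℝ) else 0) * εv ω) P := by
    intro w; rw [hIε w]; exact hint1.indicator (hs w)
  have hIε2 : ∀ w : W', (fun ω => (if W ω = w then (1:ℝ) else 0) * εv ω ^ 2)
      = Set.indicator {ω | W ω = w} (fun ω => εv ω ^ 2) := by
    intro w; funext ω; simp [Set.indicator_apply, ite_mul]
  have hIε2int : ∀ w, Integrable (fun ω => (if W ω = w then (1:ℝ) else 0) * εv ω ^ 2) P := by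
    intro w; rw [hIε2 w]; exact hint2.indicator (hs w)
  -- Integral values
  have hIint_eq : ∀ w, (∫ ω, (if W ω = w then (1:ℝ) else 0) ∂P) = e w := by
    intro w
    rw [he w, show (∫ ω, (if W ω = w then (1:ℝ) else 0) ∂P)
        = ∫ ω, Set.indicator {ω | W ω = w} (1 : Ω → ℝ) ω ∂P from by rw [← hInd w]]
    exact integral_indicator_one (hs w)
  have hφ : ∀ w : W', Measurable (fun x : W' => if x = w then (1:ℝ) else 0) :=
    fun w => measurable_of_countable _
  have hIεint_eq : ∀ w, (∫ ω, (if W ω = w then (1:ℝ) else 0) * εv ω ∂P) = 0 := by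
    intro w
    have hind2 : IndepFun εv (fun ω => if W ω = w then (1:ℝ) else 0) P :=
      hindep.comp measurable_id (hφ w)
    calc (∫ ω, (if W ω = w then (1:ℝ) else 0) * εv ω ∂P)
        = ∫ ω, (εv * fun ω => if W ω = w then (1:ℝ) else 0) ω ∂P := by
          refine integral_congr_ae (Filter.Eventually.of_forall fun ω => ?_)
          simp [mul_comm]
      _ = (∫ ω, εv ω ∂P) * ∫ ω, (if W ω = w then (1:ℝ) else 0) ∂P :=
          hind2.integral_mul_eq_mul_integral hεmeas.aestronglyMeasurable
            (((hφ w).comp hW).aestronglyMeasurable)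
      _ = 0 := by rw [hmean]; ring
  have hIε2int_eq : ∀ w, (∫ ω, (if W ω = w then (1:ℝ) else 0) * εv ω ^ 2 ∂P)
      = σ ^ 2 * e w := by
    intro w
    have hind2 : IndepFun (fun ω => εv ω ^ 2) (fun ω => if W ω = w then (1:ℝ) else 0) P :=
      hindep.comp (measurable_id.pow_const 2) (hφ w)
    calc (∫ ω, (if W ω = w then (1:ℝ) else 0) * εv ω ^ 2 ∂P)
        = ∫ ω, ((fun ω => εv ω ^ 2) * fun ω => if W ω = w then (1:ℝ) else 0) ω ∂P := by
          refine integral_congr_ae (Filter.Eventually.of_forall fun ω => ?_)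
          simp [mul_comm]
      _ = (∫ ω, εv ω ^ 2 ∂P) * ∫ ω, (if W ω = w then (1:ℝ) else 0) ∂P :=
          hind2.integral_mul_eq_mul_integral (hεmeas.pow_const 2).aestronglyMeasurable
            (((hφ w).comp hW).aestronglyMeasurable)
      _ = σ ^ 2 * e w := by rw [hvar, hIint_eq]
  -- integrability of each summand
  have hFint : ∀ w : W', Integrable (fun ω => (A + h w) ^ 2 * (if W ω = w then (1:ℝ) else 0)
      + (2 * (A + h w) * g w) * ((if W ω = w then (1:ℝ) else 0) * εv ω)
      + g w ^ 2 * ((if W ω = w then (1:ℝ) else 0) * εv ω ^ 2)) P := by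
    intro w
    exact (((hIint w).const_mul _).add ((hIεint w).const_mul _)).add ((hIε2int w).const_mul _)
  rw [integral_finset_sum Finset.univ (fun w _ => hFint w)]
  have hterm_eq : ∀ w : W', (∫ ω, ((A + h w) ^ 2 * (if W ω = w then (1:ℝ) else 0)
      + (2 * (A + h w) * g w) * ((if W ω = w then (1:ℝ) else 0) * εv ω)
      + g w ^ 2 * ((if W ω = w then (1:ℝ) else 0) * εv ω ^ 2)) ∂P)
      = (A + h w) ^ 2 * e w + g w ^ 2 * (σ ^ 2 * e w) := by
    intro w
    have i1 : Integrable (fun ω => (A + h w) ^ 2 * (if W ω = w then (1:ℝ) else 0)) P :=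
      (hIint w).const_mul _
    have i2 : Integrable (fun ω =>
        (2 * (A + h w) * g w) * ((if W ω = w then (1:ℝ) else 0) * εv ω)) P :=
      (hIεint w).const_mul _
    have i3 : Integrable (fun ω =>
        g w ^ 2 * ((if W ω = w then (1:ℝ) else 0) * εv ω ^ 2)) P :=
      (hIε2int w).const_mul _
    have i12 : Integrable (fun ω => (A + h w) ^ 2 * (if W ω = w then (1:ℝ) else 0)
        + (2 * (A + h w) * g w) * ((if W ω = w then (1:ℝ) else 0) * εv ω)) P := i1.add i2
    rw [integral_add i12 i3, integral_add i1 i2,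
      integral_const_mul, integral_const_mul, integral_const_mul,
      hIint_eq, hIεint_eq, hIε2int_eq]
    ring
  rw [Finset.sum_congr rfl fun w _ => hterm_eq w]
  -- sum of e is 1
  have hesum : ∑ w, e w = 1 := by
    have h1 : (∑ w : W', P (W ⁻¹' {w})) = P (W ⁻¹' ↑(Finset.univ : Finset W')) :=
      sum_measure_preimage_singleton _ (fun w _ => hW (measurableSet_singleton w))
    have h2 : ∑ w, e w = (∑ w : W', P (W ⁻¹' {w})).toReal := by
      rw [ENNReal.toReal_sum (fun w _ => (measure_ne_top P _))]
      exact Finset.sum_congr rfl fun w _ => he w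
    rw [h2, h1]
    simp
  -- final algebra
  have hterm2 : ∀ w : W', (A + h w) ^ 2 * e w + g w ^ 2 * (σ ^ 2 * e w)
      = π w ^ 2 * ((μhat w - μ w) ^ 2 + σ ^ 2) / e w + A ^ 2 * e w
        - 2 * A * (π w * (μhat w - μ w)) := by
    intro w
    rw [hh, hg]
    field_simp [hene w]
    ring
  rw [Finset.sum_congr rfl fun w _ => hterm2 w, Finset.sum_sub_distrib,
    Finset.sum_add_distrib, ← Finset.mul_sum, ← Finset.mul_sum, hesum, ← hAdef]
  ring
end
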